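/- The map (J1,J2,J3,x1,x2,x3) ↦ (J1 - 2c2 x3, J2, J3 + 2c2 x1, x1, x2, x3) is a Poisson map for the e(3) Lie-Poisson bracket, and under this substitution the Hamiltonian H = J1^2+J2^2+4J3^2 - 2a1 J3 - 4c1 x2 + 4c2(J1 x3 - 2J3 x1) becomes, modulo addition of multiples of the Casimirs x1^2+x2^2+x3^2 and J1 x1+J2 x2+J3 x3 and constants, the function J1^2+J2^2+4J3^2 - 2a1 J3 - 4c1 x2 - 4a1 c2 x1 + 8c2 J3 x1 - 4c2^2 x3^2. -/
import Mathlib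


open MvPolynomial

noncomputable section

/-- The totally antisymmetric Levi-Civita symbol on three indices. -/
def eps (i j k : Fin 3) : ℝ :=
  if (i = 0 ∧ j = 1 ∧ k = 2) ∨ (i = 1 ∧ j = 2 ∧ k = 0) ∨ (i = 2 ∧ j = 0 ∧ k = 1) then 1
  else if (i = 0 ∧ j = 2 ∧ k = 1) ∨ (i = 2 ∧ j = 1 ∧ k = 0) ∨ (i = 1 ∧ j = 0 ∧ k = 2) then -1
  else 0

/-- The coordinate `J_i` on `ℝ^6 = {(J₁,J₂,J₃,x₁,x₂,x₃)}` as a polynomial. -/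
def Jv (i : Fin 3) : MvPolynomial (Fin 6) ℝ := X (Fin.castAdd 3 i)

/-- The coordinate `x_i` on `ℝ^6` as a polynomial. -/
def xv (i : Fin 3) : MvPolynomial (Fin 6) ℝ := X (Fin.natAdd 3 i)

/-- The `e(3)` Lie–Poisson bracket on polynomial functions on `ℝ^6`:
`{f,g} = Σ_{i,j,k} ε_{ijk} (J_k ∂f/∂J_i ∂g/∂J_j + x_k ∂f/∂J_i ∂g/∂x_j + x_k ∂f/∂x_i ∂g/∂J_j)`. -/
def e3Bracket (f g : MvPolynomial (Fin 6) ℝ) : MvPolynomial (Fin 6) ℝ :=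
  ∑ i : Fin 3, ∑ j : Fin 3, ∑ k : Fin 3, C (eps i j k) *
    (Jv k * pderiv (Fin.castAdd 3 i) f * pderiv (Fin.castAdd 3 j) g
     + xv k * pderiv (Fin.castAdd 3 i) f * pderiv (Fin.natAdd 3 j) g
     + xv k * pderiv (Fin.natAdd 3 i) f * pderiv (Fin.castAdd 3 j) g)

/- Auxiliary lemmas -/

lemma br_C_left (a : ℝ) (g : MvPolynomial (Fin 6) ℝ) : e3Bracket (C a) g = 0 := by
  simp [e3Bracket, pderiv_C]

lemma br_C_right (a : ℝ) (g : MvPolynomial (Fin 6) ℝ) : e3Bracket g (C a) = 0 := by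
  simp [e3Bracket, pderiv_C]

lemma br_add_left (f f' g : MvPolynomial (Fin 6) ℝ) :
    e3Bracket (f + f') g = e3Bracket f g + e3Bracket f' g := by
  unfold e3Bracket
  rw [← Finset.sum_add_distrib]
  refine Finset.sum_congr rfl fun i _ => ?_
  rw [← Finset.sum_add_distrib]
  refine Finset.sum_congr rfl fun j _ => ?_
  rw [← Finset.sum_add_distrib]
  refine Finset.sum_congr rfl fun k _ => ?_
  simp only [map_add]; ring

lemma br_add_right (f g g' : MvPolynomial (Fin 6) ℝ) :
    e3Bracket f (g + g') = e3Bracket f g + e3Bracket f g' := by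
  unfold e3Bracket
  rw [← Finset.sum_add_distrib]
  refine Finset.sum_congr rfl fun i _ => ?_
  rw [← Finset.sum_add_distrib]
  refine Finset.sum_congr rfl fun j _ => ?_
  rw [← Finset.sum_add_distrib]
  refine Finset.sum_congr rfl fun k _ => ?_
  simp only [map_add]; ring

lemma br_mul_left (f f' g : MvPolynomial (Fin 6) ℝ) :
    e3Bracket (f * f') g = f * e3Bracket f' g + f' * e3Bracket f g := by
  unfold e3Bracket
  rw [Finset.mul_sum, Finset.mul_sum, ← Finset.sum_add_distrib]
  refine Finset.sum_congr rfl fun i _ => ?_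
  rw [Finset.mul_sum, Finset.mul_sum, ← Finset.sum_add_distrib]
  refine Finset.sum_congr rfl fun j _ => ?_
  rw [Finset.mul_sum, Finset.mul_sum, ← Finset.sum_add_distrib]
  refine Finset.sum_congr rfl fun k _ => ?_
  simp only [pderiv_mul]; ring

lemma br_mul_right (f g g' : MvPolynomial (Fin 6) ℝ) :
    e3Bracket f (g * g') = g * e3Bracket f g' + g' * e3Bracket f g := by
  unfold e3Bracket
  rw [Finset.mul_sum, Finset.mul_sum, ← Finset.sum_add_distrib]
  refine Finset.sum_congr rfl fun i _ => ?_
  rw [Finset.mul_sum, Finset.mul_sum, ← Finset.sum_add_distrib]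
  refine Finset.sum_congr rfl fun j _ => ?_
  rw [Finset.mul_sum, Finset.mul_sum, ← Finset.sum_add_distrib]
  refine Finset.sum_congr rfl fun k _ => ?_
  simp only [pderiv_mul]; ring

lemma ca0 : (Fin.castAdd 3 (0:Fin 3)) = (0 : Fin 6) := rfl
lemma ca1 : (Fin.castAdd 3 (1:Fin 3)) = (1 : Fin 6) := rfl
lemma ca2 : (Fin.castAdd 3 (2:Fin 3)) = (2 : Fin 6) := rfl
lemma na0 : (Fin.natAdd 3 (0:Fin 3)) = (3 : Fin 6) := rfl
lemma na1 : (Fin.natAdd 3 (1:Fin 3)) = (4 : Fin 6) := rfl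
lemma na2 : (Fin.natAdd 3 (2:Fin 3)) = (5 : Fin 6) := rfl

variable {c2' : ℝ}

lemma v0 : ![X 0 - 2 * C c2' * X 5, X 1, X 2 + 2 * C c2' * X 3, X 3, X 4, X 5] (0:Fin 6)
    = (X 0 - 2 * C c2' * X 5 : MvPolynomial (Fin 6) ℝ) := rfl
lemma v1 : ![X 0 - 2 * C c2' * X 5, X 1, X 2 + 2 * C c2' * X 3, X 3, X 4, X 5] (1:Fin 6)
    = (X 1 : MvPolynomial (Fin 6) ℝ) := rfl
lemma v2 : ![X 0 - 2 * C c2' * X 5, X 1, X 2 + 2 * C c2' * X 3, X 3, X 4, X 5] (2:Fin 6)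
    = (X 2 + 2 * C c2' * X 3 : MvPolynomial (Fin 6) ℝ) := rfl
lemma v3 : ![X 0 - 2 * C c2' * X 5, X 1, X 2 + 2 * C c2' * X 3, X 3, X 4, X 5] (3:Fin 6)
    = (X 3 : MvPolynomial (Fin 6) ℝ) := rfl
lemma v4 : ![X 0 - 2 * C c2' * X 5, X 1, X 2 + 2 * C c2' * X 3, X 3, X 4, X 5] (4:Fin 6)
    = (X 4 : MvPolynomial (Fin 6) ℝ) := rfl
lemma v5 : ![X 0 - 2 * C c2' * X 5, X 1, X 2 + 2 * C c2' * X 3, X 3, X 4, X 5] (5:Fin 6)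
    = (X 5 : MvPolynomial (Fin 6) ℝ) := rfl

lemma pderiv_two (v : Fin 6) : pderiv v (2 : MvPolynomial (Fin 6) ℝ) = 0 := by
  rw [show (2 : MvPolynomial (Fin 6) ℝ) = C 2 from (map_ofNat C 2).symm, pderiv_C]

set_option maxHeartbeats 2000000 in
/-- The atomic case: the Poisson-map identity on pairs of coordinate functions. -/
lemma br_atom (c2 : ℝ) (m n : Fin 6) :
    e3Bracket
      (aeval (R := ℝ) ![X 0 - 2 * C c2 * X 5, X 1, X 2 + 2 * C c2 * X 3, X 3, X 4, X 5] (X m))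
      (aeval (R := ℝ) ![X 0 - 2 * C c2 * X 5, X 1, X 2 + 2 * C c2 * X 3, X 3, X 4, X 5] (X n))
    = aeval (R := ℝ) ![X 0 - 2 * C c2 * X 5, X 1, X 2 + 2 * C c2 * X 3, X 3, X 4, X 5]
        (e3Bracket (X m) (X n)) := by
  fin_cases m <;> fin_cases n <;>
  · simp only [e3Bracket, Fin.sum_univ_three, Jv, xv, ca0, ca1, ca2, na0, na1, na2]
    simp (config := { decide := true }) [eps, aeval_X, v0, v1, v2, v3, v4, v5,
      pderiv_mul, pderiv_two, pderiv_X, Pi.single_apply, map_add, map_sub, map_mul]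
    try ring

/-- Poisson-map identity when the first argument is a coordinate function. -/
lemma br_row (c2 : ℝ) (m : Fin 6) (g : MvPolynomial (Fin 6) ℝ) :
    e3Bracket
      (aeval (R := ℝ) ![X 0 - 2 * C c2 * X 5, X 1, X 2 + 2 * C c2 * X 3, X 3, X 4, X 5] (X m))
      (aeval (R := ℝ) ![X 0 - 2 * C c2 * X 5, X 1, X 2 + 2 * C c2 * X 3, X 3, X 4, X 5] g)
    = aeval (R := ℝ) ![X 0 - 2 * C c2 * X 5, X 1, X 2 + 2 * C c2 * X 3, X 3, X 4, X 5]
        (e3Bracket (X m) g) := by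
  induction g using MvPolynomial.induction_on with
  | C a =>
      rw [show ((aeval (R := ℝ)
            ![X 0 - 2 * C c2 * X 5, X 1, X 2 + 2 * C c2 * X 3, X 3, X 4, X 5]) (C a)
          : MvPolynomial (Fin 6) ℝ) = C a from aeval_C _ a,
        br_C_right, br_C_right, map_zero]
  | add p q hp hq =>
      rw [map_add, br_add_right, hp, hq, ← map_add, ← br_add_right]
  | mul_X p n hp =>
      rw [map_mul, br_mul_right, hp, br_atom]
      conv_rhs => rw [br_mul_right]
      rw [map_add, map_mul, map_mul]

/-- The Poisson-map identity in general. -/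
lemma br_poisson (c2 : ℝ) (f g : MvPolynomial (Fin 6) ℝ) :
    e3Bracket
      (aeval ![X 0 - 2 * C c2 * X 5, X 1, X 2 + 2 * C c2 * X 3, X 3, X 4, X 5] f)
      (aeval ![X 0 - 2 * C c2 * X 5, X 1, X 2 + 2 * C c2 * X 3, X 3, X 4, X 5] g)
    = aeval (R := ℝ) ![X 0 - 2 * C c2 * X 5, X 1, X 2 + 2 * C c2 * X 3, X 3, X 4, X 5]
        (e3Bracket f g) := by
  induction f using MvPolynomial.induction_on generalizing g with
  | C a =>
      rw [show ((aeval (R := ℝ)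
            ![X 0 - 2 * C c2 * X 5, X 1, X 2 + 2 * C c2 * X 3, X 3, X 4, X 5]) (C a)
          : MvPolynomial (Fin 6) ℝ) = C a from aeval_C _ a,
        br_C_left, br_C_left, map_zero]
  | add p q hp hq =>
      rw [map_add, br_add_left, hp, hq, ← map_add, ← br_add_left]
  | mul_X p n hp =>
      rw [map_mul, br_mul_left, hp, br_row]
      conv_rhs => rw [br_mul_left]
      rw [map_add, map_mul, map_mul]

/-- the map `(J,x) ↦ (J₁ - 2c₂x₃, J₂, J₃ + 2c₂x₁, x₁, x₂, x₃)` is a Poisson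
map for the `e(3)` bracket, and it carries the Hamiltonian
`H = J₁²+J₂²+4J₃² - 2a₁J₃ - 4c₁x₂ + 4c₂(J₁x₃ - 2J₃x₁)`, modulo real multiples of the
Casimirs `x₁²+x₂²+x₃²` and `J₁x₁+J₂x₂+J₃x₃` and an additive constant, to
`J₁²+J₂²+4J₃² - 2a₁J₃ - 4c₁x₂ - 4a₁c₂x₁ + 8c₂J₃x₁ - 4c₂²x₃²`. -/
theorem gc_shift_poisson_and_hamiltonian (a1 c1 c2 : ℝ) :
    (∀ f g : MvPolynomial (Fin 6) ℝ,
      e3Bracket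
        (aeval ![X 0 - 2 * C c2 * X 5, X 1, X 2 + 2 * C c2 * X 3, X 3, X 4, X 5] f)
        (aeval ![X 0 - 2 * C c2 * X 5, X 1, X 2 + 2 * C c2 * X 3, X 3, X 4, X 5] g)
      = aeval ![X 0 - 2 * C c2 * X 5, X 1, X 2 + 2 * C c2 * X 3, X 3, X 4, X 5]
          (e3Bracket f g)) ∧
    (∃ α β γ : ℝ,
      aeval ![X 0 - 2 * C c2 * X 5, X 1, X 2 + 2 * C c2 * X 3, X 3, X 4, X 5]
        (Jv 0 ^ 2 + Jv 1 ^ 2 + 4 * Jv 2 ^ 2 - 2 * C a1 * Jv 2 - 4 * C c1 * xv 1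
          + 4 * C c2 * (Jv 0 * xv 2 - 2 * Jv 2 * xv 0))
      - (Jv 0 ^ 2 + Jv 1 ^ 2 + 4 * Jv 2 ^ 2 - 2 * C a1 * Jv 2 - 4 * C c1 * xv 1
          - 4 * C a1 * C c2 * xv 0 + 8 * C c2 * Jv 2 * xv 0 - 4 * C c2 ^ 2 * xv 2 ^ 2)
      = C α * (xv 0 ^ 2 + xv 1 ^ 2 + xv 2 ^ 2)
        + C β * (Jv 0 * xv 0 + Jv 1 * xv 1 + Jv 2 * xv 2) + C γ) := by
  refine ⟨br_poisson c2, 0, 0, 0, ?_⟩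
  simp only [Jv, xv, ca0, ca1, ca2, na0, na1, na2, map_add, map_sub, map_mul, map_pow,
    map_ofNat, aeval_X, aeval_C, v0, v1, v2, v3, v4, v5, map_zero, algebraMap_eq]
  ring

end
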